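/- Let S be a finite symmetric subset of a group G with 1 ∈ S, let H be a subgroup of G, and let k be a positive integer. Then |S^k ∩ H| / |S² ∩ H| ≤ |S^{k+1}| / |S|. -/

import Mathlib

open scoped Pointwise

/-- Growth in a subgroup implies growth in the group: if `S` is a finite symmetric
subset of `G` containing `1`, `H ≤ G` a subgroup and `k > 0`, then
`|S^k ∩ H| / |S² ∩ H| ≤ |S^(k+1)| / |S|`. -/
theorem growth_in_subgroup {G : Type*} [Group G] (S : Set G) (hfin : S.Finite)
    (hone : (1 : G) ∈ S) (hsym : S = S⁻¹) (H : Subgroup G) (k : ℕ) (hk : 0 < k) :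
    (Nat.card ↥(S ^ k ∩ (H : Set G)) : ℝ) / (Nat.card ↥(S ^ 2 ∩ (H : Set G)) : ℝ) ≤
      (Nat.card ↥(S ^ (k + 1)) : ℝ) / (Nat.card ↥S : ℝ) := by
  classical
  have hinv : ∀ g ∈ S, g⁻¹ ∈ S := by
    intro g hg
    exact Set.mem_inv.1 (hsym ▸ hg)
  have hpowfin : ∀ n : ℕ, (S ^ n).Finite := by
    intro n
    induction n with
    | zero => simpa using Set.finite_one
    | succ n ih => rw [pow_succ]; exact ih.mul hfin
  -- choose a representative in S for each coset meeting S
  set Q : G → G ⧸ H := QuotientGroup.mk with hQ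
  set T : Set (G ⧸ H) := Q '' S with hT
  have hrep : ∀ q ∈ T, ∃ g ∈ S, Q g = q := by
    rintro q ⟨g, hg, rfl⟩; exact ⟨g, hg, rfl⟩
  let r : G ⧸ H → G := fun q => if h : ∃ g ∈ S, Q g = q then h.choose else 1
  have hrS : ∀ q ∈ T, r q ∈ S := by
    intro q hq
    have h := hrep q hq
    simp only [r, dif_pos h]
    exact h.choose_spec.1
  have hrQ : ∀ q ∈ T, Q (r q) = q := by
    intro q hq
    have h := hrep q hq
    simp only [r, dif_pos h]
    exact h.choose_spec.2
  -- finiteness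
  have hfinK : (S ^ k).Finite := hpowfin k
  have hfinK1 : (S ^ (k + 1)).Finite := hpowfin (k+1)
  have hfin2 : (S ^ 2).Finite := hpowfin 2
  have hTfin : T.Finite := hfin.image Q
  haveI : Finite ↥(S ^ (k + 1)) := hfinK1
  haveI : Finite ↥(S ^ 2 ∩ (H : Set G)) := (hfin2.inter_of_left _)
  haveI : Finite ↥T := hTfin
  haveI : Finite (↥T × ↥(S ^ 2 ∩ (H : Set G))) := Finite.instProd
  -- Inequality 1 : card S ≤ card T * card (S^2 ∩ H)
  have h1 : Nat.card ↥S ≤ Nat.card ↥T * Nat.card ↥(S ^ 2 ∩ (H : Set G)) := by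
    rw [← Nat.card_prod]
    have hmemT : ∀ x : ↥S, Q (x : G) ∈ T := fun x => ⟨x, x.2, rfl⟩
    have hmem2 : ∀ x : ↥S, (r (Q (x : G)))⁻¹ * (x : G) ∈ S ^ 2 ∩ (H : Set G) := by
      intro x
      constructor
      · have h1 : (r (Q (x : G)))⁻¹ ∈ S := hinv _ (hrS _ (hmemT x))
        rw [sq]
        exact Set.mul_mem_mul h1 x.2
      · have := hrQ _ (hmemT x)
        have : Q (r (Q (x : G))) = Q (x : G) := this
        exact (QuotientGroup.eq ).1 this
    refine Nat.card_le_card_of_injective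
      (fun x => (⟨Q (x : G), hmemT x⟩, ⟨(r (Q (x : G)))⁻¹ * (x : G), hmem2 x⟩)) ?_
    intro x y hxy
    simp only [Prod.mk.injEq, Subtype.mk.injEq] at hxy
    obtain ⟨hq, hv⟩ := hxy
    rw [hq] at hv
    exact Subtype.ext (by exact mul_left_cancel hv)
  -- Inequality 2 : card T * card (S^k ∩ H) ≤ card (S^(k+1))
  have h2 : Nat.card ↥T * Nat.card ↥(S ^ k ∩ (H : Set G)) ≤ Nat.card ↥(S ^ (k + 1)) := by
    rw [← Nat.card_prod]
    have hmem : ∀ (p : ↥T × ↥(S ^ k ∩ (H : Set G))),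
        r (p.1 : G ⧸ H) * (p.2 : G) ∈ S ^ (k + 1) := by
      rintro ⟨q, x⟩
      have : S ^ (k + 1) = S * S ^ k := by rw [pow_succ']
      rw [this]
      exact Set.mul_mem_mul (hrS _ q.2) x.2.1
    refine Nat.card_le_card_of_injective
      (fun p => (⟨r (p.1 : G ⧸ H) * (p.2 : G), hmem p⟩ : ↥(S ^ (k + 1)))) ?_
    rintro ⟨q, x⟩ ⟨q', x'⟩ hpq
    simp only [Subtype.mk.injEq] at hpq
    have hq : (q : G ⧸ H) = (q' : G ⧸ H) := by
      have e1 : Q (r (q : G ⧸ H) * (x : G)) = (q : G ⧸ H) := by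
        have : Q (r (q : G ⧸ H) * (x : G)) = Q (r (q : G ⧸ H)) := by
          apply (QuotientGroup.eq).2
          simpa using x.2.2
        rw [this, hrQ _ q.2]
      have e2 : Q (r (q' : G ⧸ H) * (x' : G)) = (q' : G ⧸ H) := by
        have : Q (r (q' : G ⧸ H) * (x' : G)) = Q (r (q' : G ⧸ H)) := by
          apply (QuotientGroup.eq).2
          simpa using x'.2.2
        rw [this, hrQ _ q'.2]
      rw [← e1, ← e2, hpq]
    have hx : (x : G) = (x' : G) := by
      rw [hq] at hpq
      exact mul_left_cancel hpq
    exact Prod.ext (Subtype.ext hq) (Subtype.ext hx)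
  -- positivity
  have hSpos : 0 < Nat.card ↥S := Nat.card_pos_iff.2 ⟨⟨1, hone⟩, hfin⟩
  have h2pos : 0 < Nat.card ↥(S ^ 2 ∩ (H : Set G)) := by
    refine Nat.card_pos_iff.2 ⟨⟨1, ?_, H.one_mem⟩, hfin2.inter_of_left _⟩
    exact Set.one_mem_pow hone
  -- conclude
  rw [div_le_div_iff₀ (by exact_mod_cast h2pos) (by exact_mod_cast hSpos)]
  have key : Nat.card ↥(S ^ k ∩ (H : Set G)) * Nat.card ↥S ≤
      Nat.card ↥(S ^ (k + 1)) * Nat.card ↥(S ^ 2 ∩ (H : Set G)) := by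
    calc Nat.card ↥(S ^ k ∩ (H : Set G)) * Nat.card ↥S
        ≤ Nat.card ↥(S ^ k ∩ (H : Set G)) *
            (Nat.card ↥T * Nat.card ↥(S ^ 2 ∩ (H : Set G))) :=
          Nat.mul_le_mul_left _ h1
      _ = (Nat.card ↥T * Nat.card ↥(S ^ k ∩ (H : Set G))) *
            Nat.card ↥(S ^ 2 ∩ (H : Set G)) := by ring
      _ ≤ Nat.card ↥(S ^ (k + 1)) * Nat.card ↥(S ^ 2 ∩ (H : Set G)) :=
          Nat.mul_le_mul_right _ h2
  exact_mod_cast key
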